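/- Let ι be a finite nonempty type, α ∈ [0, 1), δ ≥ 0, and let (p_t)_{t ≥ 0} be strictly positive probability distributions on ι such that KL(p_t ‖ p_{t−1}) ≤ δ for a fixed index t ≥ 1, and TV(p_{r+1}, p_r) ≤ α·TV(p_r, p_{r−1}) for all r ≥ t. Then sup_{s ≥ 1} TV(p_{t+s}, p_t) ≤ (1/(1 − α))·√(δ/2). -/

import Mathlib

/-- A probability distribution on a finite type: nonnegative and sums to 1. -/
def IsProbDist {ι : Type*} [Fintype ι] (p : ι → ℝ) : Prop :=
  (∀ i, 0 ≤ p i) ∧ ∑ i, p i = 1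

/-- Total variation distance between two functions on a finite type. -/
noncomputable def TV {ι : Type*} [Fintype ι] (p q : ι → ℝ) : ℝ :=
  (1 / 2) * ∑ i, |p i - q i|

/-- Kullback–Leibler divergence on a finite type (terms with `p i = 0` contribute `0`,
since `Real.log 0 = 0`). -/
noncomputable def KL {ι : Type*} [Fintype ι] (p q : ι → ℝ) : ℝ :=
  ∑ i, p i * Real.log (p i / q i)


open Real

noncomputable def phiAux (u : ℝ) : ℝ := Real.log u - (3/2) * ((u-1)*(u+5) / (u+2)^2)

lemma phiAux_hasDeriv {u : ℝ} (hu : 0 < u) :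
    HasDerivAt phiAux (((u+2)^3 - 27*u) / (u * (u+2)^3)) u := by
  have hne : u ≠ 0 := hu.ne'
  have hd : (u+2) ≠ 0 := by linarith
  have h1 : HasDerivAt Real.log u⁻¹ u := Real.hasDerivAt_log hne
  have hN : HasDerivAt (fun u : ℝ => (u-1)*(u+5)) ((1)*(u+5) + (u-1)*1) u :=
    (((hasDerivAt_id u).sub_const 1).mul ((hasDerivAt_id u).add_const 5))
  have hD : HasDerivAt (fun u : ℝ => (u+2)^2) (2*(u+2)^1 * 1) u :=
    ((hasDerivAt_id u).add_const 2).pow 2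
  have hQ : HasDerivAt (fun u : ℝ => ((u-1)*(u+5)) / (u+2)^2)
      ((((1)*(u+5) + (u-1)*1) * (u+2)^2 - (u-1)*(u+5) * (2*(u+2)^1 * 1)) / ((u+2)^2)^2) u :=
    hN.div hD (pow_ne_zero 2 hd)
  have := h1.sub ((hQ.const_mul (3/2 : ℝ)))
  refine (this : HasDerivAt phiAux _ u).congr_deriv ?_
  field_simp
  ring

lemma phiAux_mono : MonotoneOn phiAux (Set.Ioi (0:ℝ)) := by
  apply monotoneOn_of_hasDerivWithinAt_nonneg (f' := fun u => ((u+2)^3 - 27*u) / (u * (u+2)^3))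
    (convex_Ioi 0)
  · exact fun x hx => (phiAux_hasDeriv hx).continuousAt.continuousWithinAt
  · intro x hx
    rw [interior_Ioi] at hx
    exact (phiAux_hasDeriv hx).hasDerivWithinAt
  · intro x hx
    rw [interior_Ioi] at hx
    have hx : (0:ℝ) < x := hx
    have hnum : 0 ≤ (x+2)^3 - 27*x := by nlinarith [sq_nonneg (x-1), hx.le]
    have hden : 0 < x * (x+2)^3 := by positivity
    positivity

lemma phiAux_one : phiAux 1 = 0 := by simp [phiAux]

noncomputable def gAux (u : ℝ) : ℝ := u * Real.log u - u + 1 - (3/2) * ((u-1)^2 / (u+2))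

lemma gAux_hasDeriv {u : ℝ} (hu : 0 < u) : HasDerivAt gAux (phiAux u) u := by
  have hne : u ≠ 0 := hu.ne'
  have hd : (u+2) ≠ 0 := by linarith
  have h1 : HasDerivAt (fun u : ℝ => u * Real.log u) (1 * Real.log u + u * u⁻¹) u :=
    (hasDerivAt_id u).mul (Real.hasDerivAt_log hne)
  have hN : HasDerivAt (fun u : ℝ => (u-1)^2) (2*(u-1)^1 * 1) u :=
    ((hasDerivAt_id u).sub_const 1).pow 2
  have hD : HasDerivAt (fun u : ℝ => u+2) 1 u := (hasDerivAt_id u).add_const 2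
  have hQ : HasDerivAt (fun u : ℝ => (u-1)^2 / (u+2))
      ((2*(u-1)^1 * 1 * (u+2) - (u-1)^2 * 1) / (u+2)^2) u := hN.div hD hd
  have := (((h1.sub (hasDerivAt_id u)).add_const 1).sub (hQ.const_mul (3/2 : ℝ)))
  refine (this : HasDerivAt gAux _ u).congr_deriv ?_
  unfold phiAux
  field_simp
  ring

lemma gAux_one : gAux 1 = 0 := by simp [gAux]

lemma gAux_nonneg {u : ℝ} (hu : 0 < u) : 0 ≤ gAux u := by
  rcases le_total u 1 with h | h
  · have hanti : AntitoneOn gAux (Set.Ioc (0:ℝ) 1) := by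
      apply antitoneOn_of_hasDerivWithinAt_nonpos (f' := phiAux) (convex_Ioc 0 1)
      · exact fun x hx => (gAux_hasDeriv hx.1).continuousAt.continuousWithinAt
      · intro x hx
        rw [interior_Ioc] at hx
        exact (gAux_hasDeriv hx.1).hasDerivWithinAt
      · intro x hx
        rw [interior_Ioc] at hx
        have := phiAux_mono (Set.mem_Ioi.2 hx.1) (Set.mem_Ioi.2 one_pos) hx.2.le
        rw [phiAux_one] at this
        exact this
    have := hanti (Set.mem_Ioc.2 ⟨hu, h⟩) (Set.mem_Ioc.2 ⟨one_pos, le_refl 1⟩) h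
    rwa [gAux_one] at this
  · have hmono : MonotoneOn gAux (Set.Ici (1:ℝ)) := by
      apply monotoneOn_of_hasDerivWithinAt_nonneg (f' := phiAux) (convex_Ici 1)
      · exact fun x hx => (gAux_hasDeriv (lt_of_lt_of_le one_pos hx)).continuousAt.continuousWithinAt
      · intro x hx
        rw [interior_Ici] at hx
        exact (gAux_hasDeriv (lt_trans one_pos hx)).hasDerivWithinAt
      · intro x hx
        rw [interior_Ici] at hx
        have := phiAux_mono (Set.mem_Ioi.2 one_pos) (Set.mem_Ioi.2 (lt_trans one_pos hx)) hx.le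
        rw [phiAux_one] at this
        exact this
    have := hmono (Set.mem_Ici.2 (le_refl 1)) (Set.mem_Ici.2 h) h
    rwa [gAux_one] at this

lemma pointwise_kl {x y : ℝ} (hx : 0 < x) (hy : 0 < y) :
    3 * (x - y)^2 / (2 * (x + 2*y)) ≤ x * Real.log (x / y) - x + y := by
  have hu : 0 < x / y := div_pos hx hy
  have h := gAux_nonneg hu
  unfold gAux at h
  have hy' : y ≠ 0 := hy.ne'
  have hden : (0:ℝ) < x + 2*y := by linarith
  have hmul := mul_nonneg hy.le h
  have hexp : y * (x / y * Real.log (x / y) - x / y + 1 - 3 / 2 * ((x / y - 1) ^ 2 / (x / y + 2)))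
      = x * Real.log (x / y) - x + y - 3 * (x - y)^2 / (2 * (x + 2*y)) := by
    field_simp
  rw [hexp] at hmul
  linarith

lemma pinsker_aux {ι : Type*} [Fintype ι] (p q : ι → ℝ)
    (hp : ∀ i, 0 < p i) (hq : ∀ i, 0 < q i)
    (hps : ∑ i, p i = 1) (hqs : ∑ i, q i = 1) :
    (1 / 2) * ∑ i, |p i - q i| ≤ Real.sqrt ((∑ i, p i * Real.log (p i / q i)) / 2) := by
  set S := ∑ i, 3 * (p i - q i)^2 / (2 * (p i + 2 * q i)) with hS
  have hSle : S ≤ ∑ i, p i * Real.log (p i / q i) := by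
    have : ∑ i, p i * Real.log (p i / q i)
        = ∑ i, (p i * Real.log (p i / q i) - p i + q i) := by
      rw [Finset.sum_add_distrib, Finset.sum_sub_distrib, hps, hqs]; ring
    rw [this]
    exact Finset.sum_le_sum fun i _ => pointwise_kl (hp i) (hq i)
  have hCS : (∑ i, |p i - q i|) ^ 2 ≤ S * 2 := by
    have key : ∀ i : ι, |p i - q i| =
        Real.sqrt (3 * (p i - q i)^2 / (2 * (p i + 2 * q i))) *
        Real.sqrt (2 * (p i + 2 * q i) / 3) := by
      intro i
      have hd : (0:ℝ) < p i + 2 * q i := by nlinarith [hp i, hq i]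
      rw [← Real.sqrt_mul (div_nonneg (by positivity) (by linarith))]
      have : 3 * (p i - q i) ^ 2 / (2 * (p i + 2 * q i)) * (2 * (p i + 2 * q i) / 3)
          = (p i - q i)^2 := by have := hd.ne'; field_simp; exact mul_div_cancel_right₀ _ (by linarith)
      rw [this, Real.sqrt_sq_eq_abs]
    calc (∑ i, |p i - q i|) ^ 2
        = (∑ i, Real.sqrt (3 * (p i - q i)^2 / (2 * (p i + 2 * q i))) *
            Real.sqrt (2 * (p i + 2 * q i) / 3)) ^ 2 := by
          congr 1; exact Finset.sum_congr rfl fun i _ => key i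
      _ ≤ (∑ i, Real.sqrt (3 * (p i - q i)^2 / (2 * (p i + 2 * q i))) ^ 2) *
            ∑ i, Real.sqrt (2 * (p i + 2 * q i) / 3) ^ 2 :=
          Finset.sum_mul_sq_le_sq_mul_sq _ _ _
      _ = S * 2 := by
          congr 1
          · refine Finset.sum_congr rfl fun i _ => Real.sq_sqrt ?_
            have hd : (0:ℝ) < p i + 2 * q i := by nlinarith [hp i, hq i]
            exact div_nonneg (by positivity) (by linarith)
          · have : ∀ i : ι, Real.sqrt (2 * (p i + 2 * q i) / 3) ^ 2
                = 2 * (p i + 2 * q i) / 3 := fun i => Real.sq_sqrt (by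
                have := (hp i).le; have := (hq i).le; positivity)
            rw [Finset.sum_congr rfl fun i _ => this i]
            have h1 : ∀ i : ι, 2 * (p i + 2 * q i) / 3
                = (2/3) * p i + (4/3) * q i := fun i => by ring
            rw [Finset.sum_congr rfl fun i _ => h1 i, Finset.sum_add_distrib,
              ← Finset.mul_sum, ← Finset.mul_sum, hps, hqs]
            norm_num
  have hTVnn : 0 ≤ (1/2) * ∑ i, |p i - q i| := by positivity
  have hsq : ((1/2) * ∑ i, |p i - q i|) ^ 2 ≤ (∑ i, p i * Real.log (p i / q i)) / 2 := by
    have : ((1/2) * ∑ i, |p i - q i|) ^ 2 = (∑ i, |p i - q i|)^2 / 4 := by ring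
    rw [this]; linarith
  calc (1/2) * ∑ i, |p i - q i|
      = Real.sqrt (((1/2) * ∑ i, |p i - q i|)^2) := (Real.sqrt_sq hTVnn).symm
    _ ≤ Real.sqrt ((∑ i, p i * Real.log (p i / q i)) / 2) := Real.sqrt_le_sqrt hsq

lemma TV_nonneg {ι : Type*} [Fintype ι] (p q : ι → ℝ) : 0 ≤ TV p q := by
  unfold TV; positivity

lemma TV_triangle {ι : Type*} [Fintype ι] (a b c : ι → ℝ) : TV a c ≤ TV a b + TV b c := by
  unfold TV
  rw [← mul_add, ← Finset.sum_add_distrib]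
  have : ∀ i : ι, |a i - c i| ≤ |a i - b i| + |b i - c i| := fun i => abs_sub_le _ _ _
  have := Finset.sum_le_sum (fun i (_ : i ∈ Finset.univ) => this i)
  linarith

/-- Uniform tail bound.
If `KL (p t) (p (t-1)) ≤ δ` and `TV (p (r+1)) (p r) ≤ α · TV (p r) (p (r-1))` for all
`r ≥ t`, then `sup_{s ≥ 1} TV (p (t+s)) (p t) ≤ (1/(1−α))·√(δ/2)`. -/
theorem uniform_tail_bound
    {ι : Type*} [Fintype ι] [Nonempty ι]
    (α δ : ℝ) (hα : α ∈ Set.Ico (0 : ℝ) 1) (hδ : 0 ≤ δ)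
    (t : ℕ) (ht : 1 ≤ t)
    (p : ℕ → ι → ℝ) (hprob : ∀ u, IsProbDist (p u)) (hpos : ∀ u i, 0 < p u i)
    (hKL : KL (p t) (p (t - 1)) ≤ δ)
    (hcontr : ∀ r ≥ t, TV (p (r + 1)) (p r) ≤ α * TV (p r) (p (r - 1))) :
    ∀ s ≥ 1, TV (p (t + s)) (p t) ≤ 1 / (1 - α) * Real.sqrt (δ / 2) := by
  obtain ⟨hα0, hα1⟩ := hα
  intro s hs
  set D := TV (p t) (p (t - 1)) with hDdef
  have hDnn : 0 ≤ D := TV_nonneg _ _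
  have hD : D ≤ Real.sqrt (δ / 2) := by
    have hpin := pinsker_aux (p t) (p (t - 1)) (hpos t) (hpos (t - 1))
      (hprob t).2 (hprob (t - 1)).2
    have h1 : D ≤ Real.sqrt (KL (p t) (p (t - 1)) / 2) := hpin
    exact h1.trans (Real.sqrt_le_sqrt (by linarith))
  -- step bound
  have hstep : ∀ k : ℕ, TV (p (t + k + 1)) (p (t + k)) ≤ α ^ (k + 1) * D := by
    intro k
    induction k with
    | zero =>
      have := hcontr t (le_refl t)
      simpa using this
    | succ k ih =>
      have h := hcontr (t + k + 1) (by omega)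
      have heq : t + k + 1 - 1 = t + k := by omega
      rw [heq] at h
      calc TV (p (t + (k+1) + 1)) (p (t + (k+1)))
          = TV (p (t + k + 1 + 1)) (p (t + k + 1)) := by ring_nf
        _ ≤ α * TV (p (t + k + 1)) (p (t + k)) := h
        _ ≤ α * (α ^ (k + 1) * D) := mul_le_mul_of_nonneg_left ih hα0
        _ = α ^ (k + 1 + 1) * D := by ring
  -- telescoping
  have htel : ∀ n : ℕ, TV (p (t + n)) (p t) ≤ ∑ k ∈ Finset.range n, α ^ (k + 1) * D := by
    intro n
    induction n with
    | zero => simp [TV]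
    | succ n ih =>
      calc TV (p (t + (n + 1))) (p t)
          ≤ TV (p (t + n + 1)) (p (t + n)) + TV (p (t + n)) (p t) := by
            have := TV_triangle (p (t + n + 1)) (p (t + n)) (p t)
            simpa [Nat.add_assoc] using this
        _ ≤ α ^ (n + 1) * D + ∑ k ∈ Finset.range n, α ^ (k + 1) * D :=
            add_le_add (hstep n) ih
        _ = ∑ k ∈ Finset.range (n + 1), α ^ (k + 1) * D := by
            rw [Finset.sum_range_succ]; ring
  -- geometric bound
  have hgeom : ∑ k ∈ Finset.range s, α ^ (k + 1) * D ≤ 1 / (1 - α) * D := by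
    have h1α : (0:ℝ) < 1 - α := by linarith
    have hsum : ∑ k ∈ Finset.range s, α ^ k ≤ 1 / (1 - α) := by
      rw [geom_sum_eq (by linarith : α ≠ 1)]
      have heq : (α ^ s - 1) / (α - 1) = (1 - α ^ s) / (1 - α) := by
        rw [div_eq_div_iff (by linarith) (by linarith)]; ring
      rw [heq, div_le_div_iff₀ h1α h1α]
      have : (0:ℝ) ≤ α ^ s := pow_nonneg hα0 s
      nlinarith
    have : ∑ k ∈ Finset.range s, α ^ (k + 1) * D
        = α * (∑ k ∈ Finset.range s, α ^ k) * D := by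
      rw [Finset.mul_sum, Finset.sum_mul]
      exact Finset.sum_congr rfl fun k _ => by ring
    rw [this]
    have h2 : α * (∑ k ∈ Finset.range s, α ^ k) ≤ 1 * (1 / (1 - α)) := by
      apply mul_le_mul (by linarith) hsum _ (by norm_num)
      positivity
    rw [one_mul] at h2
    exact mul_le_mul_of_nonneg_right h2 hDnn
  calc TV (p (t + s)) (p t) ≤ ∑ k ∈ Finset.range s, α ^ (k + 1) * D := htel s
    _ ≤ 1 / (1 - α) * D := hgeom
    _ ≤ 1 / (1 - α) * Real.sqrt (δ / 2) := by
        apply mul_le_mul_of_nonneg_left hD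
        have h1α : (0:ℝ) < 1 - α := by linarith
        positivity
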